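/- Let g : ℝ → ℝ be a continuous function with g(0) = 1/2. Define the model Dehn twist τ : T → ℝ³ × ℝ³ by τ(u,v) = σ_{2π·g(‖u‖)}(u,v) when u ≠ 0 and τ(0,v) = (0,−v) when u = 0. Then τ is a continuous map from T (with the subspace topology) to T; in particular the twist defined off the zero section by the flow extends continuously over the zero section as the antipodal map. -/

import Mathlib

open scoped Classical

/-- The normalized geodesic flow on the standard model `T*S² ⊂ ℝ³ × ℝ³`. -/
noncomputable def geoFlow (t : ℝ)
    (p : EuclideanSpace ℝ (Fin 3) × EuclideanSpace ℝ (Fin 3)) :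
    EuclideanSpace ℝ (Fin 3) × EuclideanSpace ℝ (Fin 3) :=
  (Real.cos t • p.1 - (Real.sin t * ‖p.1‖) • p.2,
   Real.cos t • p.2 + (Real.sin t / ‖p.1‖) • p.1)

/-- The standard model `T = {(u,v) : ⟨u,v⟩ = 0, ‖v‖ = 1}` of the cotangent bundle `T*S²`. -/
def cotangentS2 : Set (EuclideanSpace ℝ (Fin 3) × EuclideanSpace ℝ (Fin 3)) :=
  {p | inner ℝ p.1 p.2 = (0 : ℝ) ∧ ‖p.2‖ = 1}

/-- The model Dehn twist: `σ_{2π g(‖u‖)}` off the zero section, extended over the zero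
section by the antipodal map. -/
noncomputable def modelDehnTwist (g : ℝ → ℝ)
    (p : EuclideanSpace ℝ (Fin 3) × EuclideanSpace ℝ (Fin 3)) :
    EuclideanSpace ℝ (Fin 3) × EuclideanSpace ℝ (Fin 3) :=
  if p.1 = 0 then (0, -p.2) else geoFlow (2 * Real.pi * g ‖p.1‖) p

noncomputable def twistAux (g : ℝ → ℝ)
    (q : EuclideanSpace ℝ (Fin 3) × EuclideanSpace ℝ (Fin 3)) :
    EuclideanSpace ℝ (Fin 3) :=
  if q.1 = 0 then 0 else (Real.sin (2 * Real.pi * g ‖q.1‖) / ‖q.1‖) • q.1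

lemma twistAux_norm_le (g : ℝ → ℝ) (q : EuclideanSpace ℝ (Fin 3) × EuclideanSpace ℝ (Fin 3)) :
    ‖twistAux g q‖ ≤ |Real.sin (2 * Real.pi * g ‖q.1‖)| := by
  unfold twistAux
  split_ifs with h
  · simp
  · have hn : ‖q.1‖ ≠ 0 := norm_ne_zero_iff.mpr h
    rw [norm_smul, Real.norm_eq_abs, abs_div, abs_of_nonneg (norm_nonneg _),
      div_mul_cancel₀ _ hn]

lemma twistAux_continuous (g : ℝ → ℝ) (hg : Continuous g) (hg0 : g 0 = 1 / 2) :
    Continuous (twistAux g) := by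
  have hh : Continuous fun q : EuclideanSpace ℝ (Fin 3) × EuclideanSpace ℝ (Fin 3) =>
      Real.sin (2 * Real.pi * g ‖q.1‖) :=
    Real.continuous_sin.comp ((continuous_const.mul (hg.comp (continuous_fst.norm))))
  rw [continuous_iff_continuousAt]
  intro p
  by_cases hp : p.1 = 0
  · -- squeeze to 0
    have hval : twistAux g p = 0 := by simp [twistAux, hp]
    rw [ContinuousAt, hval]
    have hlim : Filter.Tendsto (fun q : EuclideanSpace ℝ (Fin 3) × EuclideanSpace ℝ (Fin 3) =>
        |Real.sin (2 * Real.pi * g ‖q.1‖)|) (nhds p) (nhds 0) := by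
      have := (hh.abs).continuousAt (x := p)
      have hz : |Real.sin (2 * Real.pi * g ‖p.1‖)| = 0 := by
        rw [hp]
        have hpi : 2 * Real.pi * g ‖(0 : EuclideanSpace ℝ (Fin 3))‖ = Real.pi := by
          simp [hg0]; ring
        rw [hpi, Real.sin_pi, abs_zero]
      rw [ContinuousAt, hz] at this
      exact this
    exact squeeze_zero_norm (twistAux_norm_le g) hlim
  · have hopen : IsOpen {q : EuclideanSpace ℝ (Fin 3) × EuclideanSpace ℝ (Fin 3) | q.1 ≠ 0} :=
      isOpen_ne_fun continuous_fst continuous_const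
    have heq : twistAux g =ᶠ[nhds p]
        (fun q => (Real.sin (2 * Real.pi * g ‖q.1‖) / ‖q.1‖) • q.1) := by
      filter_upwards [hopen.mem_nhds hp] with q hq
      simp [twistAux, hq]
    have hc : ContinuousAt (fun q : EuclideanSpace ℝ (Fin 3) × EuclideanSpace ℝ (Fin 3) =>
        (Real.sin (2 * Real.pi * g ‖q.1‖) / ‖q.1‖) • q.1) p := by
      apply ContinuousAt.fun_smul
      · exact (hh.continuousAt).div (continuous_fst.norm.continuousAt)
          (norm_ne_zero_iff.mpr hp)
      · exact continuous_fst.continuousAt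
    exact hc.congr heq.symm

lemma modelDehnTwist_eq (g : ℝ → ℝ) (hg0 : g 0 = 1 / 2)
    (q : EuclideanSpace ℝ (Fin 3) × EuclideanSpace ℝ (Fin 3)) :
    modelDehnTwist g q =
      (Real.cos (2 * Real.pi * g ‖q.1‖) • q.1 -
         (Real.sin (2 * Real.pi * g ‖q.1‖) * ‖q.1‖) • q.2,
       Real.cos (2 * Real.pi * g ‖q.1‖) • q.2 + twistAux g q) := by
  unfold modelDehnTwist geoFlow twistAux
  split_ifs with h
  · have hpi : 2 * Real.pi * g ‖q.1‖ = Real.pi := by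
      rw [h]; simp [hg0]; ring
    rw [hpi, h]
    simp [Real.cos_pi]
  · rfl

theorem modelDehnTwist_continuous (g : ℝ → ℝ) (hg : Continuous g) (hg0 : g 0 = 1 / 2) :
    ContinuousOn (modelDehnTwist g) cotangentS2 ∧
    Set.MapsTo (modelDehnTwist g) cotangentS2 cotangentS2 := by
  have hh : Continuous fun q : EuclideanSpace ℝ (Fin 3) × EuclideanSpace ℝ (Fin 3) =>
      2 * Real.pi * g ‖q.1‖ := continuous_const.mul (hg.comp continuous_fst.norm)
  have hcont : Continuous (modelDehnTwist g) := by
    have : Continuous fun q : EuclideanSpace ℝ (Fin 3) × EuclideanSpace ℝ (Fin 3) =>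
        (Real.cos (2 * Real.pi * g ‖q.1‖) • q.1 -
           (Real.sin (2 * Real.pi * g ‖q.1‖) * ‖q.1‖) • q.2,
         Real.cos (2 * Real.pi * g ‖q.1‖) • q.2 + twistAux g q) := by
      apply Continuous.prodMk
      · exact ((Real.continuous_cos.comp hh).smul continuous_fst).sub
          (((Real.continuous_sin.comp hh).mul continuous_fst.norm).smul continuous_snd)
      · exact ((Real.continuous_cos.comp hh).smul continuous_snd).add
          (twistAux_continuous g hg hg0)
    exact this.congr fun q => (modelDehnTwist_eq g hg0 q).symm
  refine ⟨hcont.continuousOn, ?_⟩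
  rintro ⟨u, v⟩ ⟨huv, hv⟩
  by_cases hu : u = 0
  · constructor <;> simp [modelDehnTwist, hu, hv]
  · set t := 2 * Real.pi * g ‖u‖ with ht
    have hmt : modelDehnTwist g (u, v) = geoFlow t (u, v) := by
      simp [modelDehnTwist, hu, ht]
    rw [hmt]
    have hn : ‖u‖ ≠ 0 := norm_ne_zero_iff.mpr hu
    have hvu : (inner ℝ v u : ℝ) = 0 := by rw [real_inner_comm]; exact huv
    have huu : (inner ℝ u u : ℝ) = ‖u‖ ^ 2 := real_inner_self_eq_norm_sq u
    have hvv : (inner ℝ v v : ℝ) = 1 := by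
      rw [real_inner_self_eq_norm_sq, hv]; norm_num
    constructor
    · show (inner ℝ (Real.cos t • u - (Real.sin t * ‖u‖) • v)
        (Real.cos t • v + (Real.sin t / ‖u‖) • u) : ℝ) = 0
      rw [inner_sub_left, inner_add_right, inner_add_right,
        real_inner_smul_left, real_inner_smul_left, real_inner_smul_right,
        real_inner_smul_right, real_inner_smul_left, real_inner_smul_left,
        real_inner_smul_right, real_inner_smul_right, huv, hvu, huu, hvv]
      field_simp
      ring
    · show ‖Real.cos t • v + (Real.sin t / ‖u‖) • u‖ = 1
      have hsq : ‖Real.cos t • v + (Real.sin t / ‖u‖) • u‖ ^ 2 = 1 := by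
        rw [norm_add_sq_real, real_inner_smul_left, real_inner_smul_right, hvu,
          norm_smul, norm_smul, hv, Real.norm_eq_abs, Real.norm_eq_abs]
        have h1 : |Real.cos t| ^ 2 = Real.cos t ^ 2 := sq_abs _
        have h2 : (|Real.sin t / ‖u‖| * ‖u‖) ^ 2 = Real.sin t ^ 2 := by
          rw [abs_div, abs_of_nonneg (norm_nonneg _), div_mul_cancel₀ _ hn, sq_abs]
        rw [mul_one, h1, h2]
        simp only [mul_zero, zero_mul, add_zero]
        linarith [Real.sin_sq_add_cos_sq t]
      calc ‖Real.cos t • v + (Real.sin t / ‖u‖) • u‖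
          = Real.sqrt (‖Real.cos t • v + (Real.sin t / ‖u‖) • u‖ ^ 2) := by
            rw [Real.sqrt_sq (norm_nonneg _)]
        _ = 1 := by rw [hsq, Real.sqrt_one]
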